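/- arXiv:1408.4581 — 3 statements merged into one kernel-verified Lean document; each statement's English description precedes it below -/
import Mathlib

section
/- Let 0<p₀,p₁<∞, 0<q₀,q₁≤∞, α,γ∈ℝ, and let ∇ be a multiscale grid of dimension d∈ℕ satisfying (A4b) (i.e. #∇_j = ∞ for all j∈ℕ₀). Then the following are equivalent: (i) b^{α+γ}_{p₀,q₀}(∇) ⊆ b^{α}_{p₁,q₁}(∇) as sets; (ii) the identity map from b^{α+γ}_{p₀,q₀}(∇) into b^{α}_{p₁,q₁}(∇) is continuous; (iii) p₀ ≤ p₁ and in addition either γ > d·max{0, 1/p₀ − 1/p₁}, or γ = d·max{0, 1/p₀ − 1/p₁} and q₀ ≤ q₁. -/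
open scoped ENNReal NNReal BigOperators

noncomputable section

/-- A multiscale grid of dimension `d` for the metric space `Γ` with finite type set `T`,
in the sense of Definition 2.1 (assumptions (A1)–(A3)). -/
structure MultiscaleGrid (Γ : Type*) [MetricSpace Γ] (T : Type*) [Fintype T] [Nonempty T]
    (d : ℕ) where
  grid : ℕ → Set (Γ × T)
  c₁ : ℝ
  c₁_pos : 0 < c₁
  /-- (A1): `∇_j` is a `c₁·2^{-j}`-net for `Γ × T` w.r.t. the pseudometric
  `dist((y,t),(y',t')) = ρ_Γ(y,y')`. -/
  net : ∀ (j : ℕ) (x : Γ × T), ∃ ξ ∈ grid j, dist ξ.1 x.1 ≤ c₁ / 2 ^ j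
  c₂ : ℝ
  c₂_pos : 0 < c₂
  sepBound : ℕ
  /-- (A2): uniform well-separatedness. -/
  sep : ∀ (j : ℕ), ∀ ξ ∈ grid j,
    {ξ' ∈ grid j | dist ξ.1 ξ'.1 ≤ c₂ / 2 ^ j}.Finite ∧
      ({ξ' ∈ grid j | dist ξ.1 ξ'.1 ≤ c₂ / 2 ^ j}).ncard ≤ sepBound
  c₃ : ℝ
  c₃_pos : 0 < c₃
  dimA : ℝ
  dimB : ℝ
  dimA_pos : 0 < dimA
  dimA_le_dimB : dimA ≤ dimB
  /-- (A3), upper bound: uniform `d`-dimensionality. -/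
  dim_upper : ∀ (j : ℕ), ∀ ξ ∈ grid j,
    {ξ' ∈ grid j | dist ξ.1 ξ'.1 ≤ c₃}.Finite ∧
      (({ξ' ∈ grid j | dist ξ.1 ξ'.1 ≤ c₃}).ncard : ℝ) ≤ dimB * 2 ^ (d * j)
  /-- (A3), lower bound. -/
  dim_lower : ∀ j : ℕ, ∃ ξ ∈ grid j,
    dimA * 2 ^ (d * j) ≤ (({ξ' ∈ grid j | dist ξ.1 ξ'.1 ≤ c₃}).ncard : ℝ)

variable {Γ T : Type*} [MetricSpace Γ] [Fintype T] [Nonempty T] {d : ℕ}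

/-- The weight `2^{j(α + d(1/2 - 1/p))}` appearing in the Besov sequence quasi-norm. -/
def besovWeight (d : ℕ) (α p : ℝ) (j : ℕ) : ℝ≥0∞ :=
  ENNReal.ofReal ((2 : ℝ) ^ ((j : ℝ) * (α + d * (1 / 2 - 1 / p))))

/-- The level-`j` `ℓ_p` norm `(Σ_{ξ∈∇_j} |a_{(j,ξ)}|^p)^{1/p}` (as an `ℝ≥0∞`-valued quantity). -/
def levelNorm (N : MultiscaleGrid Γ T d) (p : ℝ) (a : ℕ → Γ × T → ℂ) (j : ℕ) : ℝ≥0∞ :=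
  (∑' ξ : N.grid j, (‖a j ↑ξ‖₊ : ℝ≥0∞) ^ p) ^ (1 / p)

/-- The Besov sequence quasi-norm `‖a | b^α_{p,q}(∇)‖` (value `∞` allowed; `q ∈ (0,∞]`). -/
def besovNorm (N : MultiscaleGrid Γ T d) (α p : ℝ) (q : ℝ≥0∞)
    (a : ℕ → Γ × T → ℂ) : ℝ≥0∞ :=
  if q = ∞ then ⨆ j, besovWeight d α p j * levelNorm N p a j
  else (∑' j, (besovWeight d α p j * levelNorm N p a j) ^ q.toReal) ^ (1 / q.toReal)

/-- The Besov sequence space `b^α_{p,q}(∇)` as a set of coefficient arrays. -/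
def besovSpace (N : MultiscaleGrid Γ T d) (α p : ℝ) (q : ℝ≥0∞) :
    Set (ℕ → Γ × T → ℂ) :=
  {a | besovNorm N α p q a < ∞}

/-- `σ_p = d·max{1/p − 1, 0}`. -/
def sigmaP (d : ℕ) (p : ℝ) : ℝ := d * max (1 / p - 1) 0

/-- The almost-diagonality majorant `ω_{(j,ξ),(k,η)}(ε)`. -/
def adWeight (d : ℕ) (p α₀ α₁ ε : ℝ) (j : ℕ) (ξ : Γ × T) (k : ℕ) (η : Γ × T) : ℝ :=
  (2 : ℝ) ^ ((k : ℝ) * α₀ - (j : ℝ) * α₁) *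
    min ((2 : ℝ) ^ (-((j : ℝ) - (k : ℝ)) * ((d : ℝ) / 2 + ε)))
        ((2 : ℝ) ^ (((j : ℝ) - (k : ℝ)) * ((d : ℝ) / 2 + ε + sigmaP d p))) /
    (1 + min ((2 : ℝ) ^ k) ((2 : ℝ) ^ j) * dist ξ.1 η.1) ^ ((d : ℝ) + ε + sigmaP d p)

/-- The almost-diagonality estimate with fixed witnesses `ε` and `C`. -/
def adBound (N0 N1 : MultiscaleGrid Γ T d) (α₀ α₁ p ε C : ℝ)
    (m : ℕ → Γ × T → ℕ → Γ × T → ℂ) : Prop :=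
  ∀ j : ℕ, ∀ ξ ∈ N1.grid j, ∀ k : ℕ, ∀ η ∈ N0.grid k,
    ‖m j ξ k η‖ ≤ C * adWeight d p α₀ α₁ ε j ξ k η

/-- `M ∈ ad^{α₀,α₁}_p`: the matrix is almost diagonal between `b^{α₀}_{p,q}(∇⁰)` and
`b^{α₁}_{p,q}(∇¹)`. -/
def isAlmostDiagonal (N0 N1 : MultiscaleGrid Γ T d) (α₀ α₁ p : ℝ)
    (m : ℕ → Γ × T → ℕ → Γ × T → ℂ) : Prop :=
  ∃ ε > 0, ∃ C > 0, adBound N0 N1 α₀ α₁ p ε C m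

/-- (A4a): `#∇_j ∼ 2^{dj}`. -/
def A4a (N : MultiscaleGrid Γ T d) : Prop :=
  ∃ A B : ℝ, 0 < A ∧ A ≤ B ∧ ∀ j : ℕ, (N.grid j).Finite ∧
    A * 2 ^ (d * j) ≤ ((N.grid j).ncard : ℝ) ∧ ((N.grid j).ncard : ℝ) ≤ B * 2 ^ (d * j)

/-- (A4b): `#∇_j = ∞` for all `j`. -/
def A4b (N : MultiscaleGrid Γ T d) : Prop := ∀ j : ℕ, (N.grid j).Infinite

/-- Admissibility of the parameter tuple `(α,p,q)` for the grid `∇`. -/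
def Admissible (N : MultiscaleGrid Γ T d) (α p : ℝ) (q : ℝ≥0∞) : Prop :=
  0 < p ∧ (A4b N → p ≤ 2) ∧
    ((d * max 0 (1 / p - 1 / 2) < α ∧ 0 < q) ∨
      (α = d * max 0 (1 / p - 1 / 2) ∧ 0 < q ∧ q ≤ 2))
/-! ### Auxiliary machinery for the proof -/

open ENNReal in
/-- The `ℓ_q` (quasi-)norm on sequences indexed by `ℕ`, matching the outer norm in
`besovNorm`. -/
def qnorm (q : ℝ≥0∞) (f : ℕ → ℝ≥0∞) : ℝ≥0∞ :=
  if q = ∞ then ⨆ j, f j else (∑' j, f j ^ q.toReal) ^ (1 / q.toReal)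

lemma besovNorm_eq_qnorm (N : MultiscaleGrid Γ T d) (α p : ℝ) (q : ℝ≥0∞)
    (a : ℕ → Γ × T → ℂ) :
    besovNorm N α p q a = qnorm q (fun j => besovWeight d α p j * levelNorm N p a j) := rfl

lemma lp_mono {ι : Type*} (f : ι → ℝ≥0∞) {p r : ℝ} (hp : 0 < p) (hpr : p ≤ r) :
    (∑' i, f i ^ r) ^ (1/r) ≤ (∑' i, f i ^ p) ^ (1/p) := by
  have hr : 0 < r := hp.trans_le hpr
  set S := ∑' i, f i ^ p with hS
  rcases eq_or_ne S ⊤ with h | h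
  · rw [h, ENNReal.top_rpow_of_pos (by positivity)]; exact le_top
  · have hterm : ∀ i, f i ^ p ≤ S := fun i => ENNReal.le_tsum i
    have key : ∀ i, f i ^ r ≤ f i ^ p * S ^ ((r - p)/p) := by
      intro i
      have : f i ^ r = f i ^ p * f i ^ (r - p) := by
        rw [← ENNReal.rpow_add_of_nonneg _ _ hp.le (by linarith)]
        ring_nf
      rw [this]
      refine mul_le_mul_right ?_ _
      have h1 : f i ≤ S ^ (1/p) := by
        calc f i = (f i ^ p) ^ (1/p) := by
              rw [← ENNReal.rpow_mul, mul_one_div, div_self hp.ne', ENNReal.rpow_one]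
          _ ≤ S ^ (1/p) := ENNReal.rpow_le_rpow (hterm i) (by positivity)
      calc f i ^ (r-p) ≤ (S ^ (1/p)) ^ (r-p) := ENNReal.rpow_le_rpow h1 (by linarith)
        _ = S ^ ((r-p)/p) := by rw [← ENNReal.rpow_mul]; ring_nf
    calc (∑' i, f i ^ r) ^ (1/r) ≤ (∑' i, f i ^ p * S ^ ((r-p)/p)) ^ (1/r) :=
          ENNReal.rpow_le_rpow (ENNReal.tsum_le_tsum key) (by positivity)
      _ = (S * S ^ ((r-p)/p)) ^ (1/r) := by rw [ENNReal.tsum_mul_right]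
      _ = (S ^ (r/p)) ^ (1/r) := by
          congr 1
          have hrp : r/p = 1 + (r-p)/p := by field_simp; ring
          rw [hrp, ENNReal.rpow_add_of_nonneg _ _ zero_le_one
            (div_nonneg (by linarith) hp.le), ENNReal.rpow_one]
      _ = S ^ (1/p) := by rw [← ENNReal.rpow_mul]; congr 1; field_simp

lemma term_le_qnorm {q : ℝ≥0∞} (hq : 0 < q) (f : ℕ → ℝ≥0∞) (j : ℕ) : f j ≤ qnorm q f := by
  unfold qnorm
  split_ifs with h
  · exact le_iSup f j
  · have ht : 0 < q.toReal := ENNReal.toReal_pos hq.ne' h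
    calc f j = (f j ^ q.toReal) ^ (1/q.toReal) := by
          rw [← ENNReal.rpow_mul, mul_one_div, div_self ht.ne', ENNReal.rpow_one]
      _ ≤ _ := ENNReal.rpow_le_rpow (ENNReal.le_tsum j) (by positivity)

lemma qnorm_mono_fn {q : ℝ≥0∞} {f g : ℕ → ℝ≥0∞} (h : ∀ j, f j ≤ g j) :
    qnorm q f ≤ qnorm q g := by
  unfold qnorm
  split_ifs with hq
  · exact iSup_mono h
  · exact ENNReal.rpow_le_rpow (ENNReal.tsum_le_tsum fun j =>
      ENNReal.rpow_le_rpow (h j) ENNReal.toReal_nonneg) (by positivity)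

lemma qnorm_mono_q {q₀ q₁ : ℝ≥0∞} (hq₀ : 0 < q₀) (hq : q₀ ≤ q₁) (f : ℕ → ℝ≥0∞) :
    qnorm q₁ f ≤ qnorm q₀ f := by
  rcases eq_or_ne q₁ ∞ with h1 | h1
  · subst h1
    rcases eq_or_ne q₀ ∞ with h0 | h0
    · subst h0; exact le_rfl
    · rw [qnorm, if_pos rfl]
      exact iSup_le fun j => term_le_qnorm hq₀ f j
  · have h0 : q₀ ≠ ∞ := fun h => h1 (top_le_iff.mp (h ▸ hq))
    rw [qnorm, if_neg h1, qnorm, if_neg h0]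
    exact lp_mono f (ENNReal.toReal_pos hq₀.ne' h0)
      (ENNReal.toReal_le_toReal h0 h1 |>.mpr hq)

lemma qnorm_eq_top_of_unbounded {q : ℝ≥0∞} (hq : 0 < q) {f : ℕ → ℝ≥0∞}
    (h : ∀ C : ℝ≥0∞, C < ∞ → ∃ j, C < f j) : qnorm q f = ∞ := by
  by_contra h'
  obtain ⟨j, hj⟩ := h (qnorm q f) (lt_top_iff_ne_top.mpr h')
  exact absurd (term_le_qnorm hq f j) (not_le.mpr hj)

lemma qnorm_geom {q : ℝ≥0∞} (hq : 0 < q) {δ : ℝ} (hδ : 0 < δ) :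
    ∃ K : ℝ, 0 < K ∧ ∀ c : ℝ≥0∞,
      qnorm q (fun j => ENNReal.ofReal ((2:ℝ) ^ (-(j:ℝ) * δ)) * c) ≤ ENNReal.ofReal K * c := by
  rcases eq_or_ne q ∞ with h | h
  · refine ⟨1, one_pos, fun c => ?_⟩
    rw [qnorm, if_pos h, ENNReal.ofReal_one, one_mul]
    refine iSup_le fun j => ?_
    have h2 : (2:ℝ) ^ (-(j:ℝ) * δ) ≤ 1 :=
      Real.rpow_le_one_of_one_le_of_nonpos one_le_two
        (by rw [neg_mul]; exact neg_nonpos.mpr (by positivity))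
    calc ENNReal.ofReal ((2:ℝ) ^ (-(j:ℝ) * δ)) * c ≤ 1 * c := by
          gcongr
          exact (ENNReal.ofReal_le_one).mpr h2
      _ = c := one_mul c
  · have ht : 0 < q.toReal := ENNReal.toReal_pos hq.ne' h
    set t := q.toReal
    have hsum : (∑' j : ℕ, (ENNReal.ofReal ((2:ℝ) ^ (-(j:ℝ) * δ))) ^ t) ≠ ∞ := by
      have heq : ∀ j : ℕ, (ENNReal.ofReal ((2:ℝ) ^ (-(j:ℝ) * δ))) ^ t
          = (ENNReal.ofReal ((2:ℝ) ^ (-(δ * t)))) ^ j := by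
        intro j
        rw [ENNReal.ofReal_rpow_of_nonneg (by positivity) ht.le, ← ENNReal.ofReal_pow
          (by positivity)]
        congr 1
        rw [← Real.rpow_natCast ((2:ℝ) ^ (-(δ*t))) j, ← Real.rpow_mul (by norm_num),
          ← Real.rpow_mul (by norm_num)]
        ring_nf
      rw [tsum_congr heq, ENNReal.tsum_geometric]
      refine ENNReal.inv_ne_top.mpr ?_
      have hlt : ENNReal.ofReal ((2:ℝ) ^ (-(δ * t))) < 1 := by
        rw [← ENNReal.ofReal_one]
        exact ENNReal.ofReal_lt_ofReal_iff_of_nonneg (by positivity) |>.mpr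
          (Real.rpow_lt_one_of_one_lt_of_neg one_lt_two (by nlinarith))
      simp only [ne_eq, tsub_eq_zero_iff_le, not_le]
      exact hlt
    set G := (∑' j : ℕ, (ENNReal.ofReal ((2:ℝ) ^ (-(j:ℝ) * δ))) ^ t) ^ (1/t) with hG
    have hGfin : G ≠ ∞ := by
      rw [hG]
      exact (ENNReal.rpow_lt_top_of_nonneg (by positivity) hsum).ne
    refine ⟨max G.toReal 1, lt_max_of_lt_right one_pos, fun c => ?_⟩
    rw [qnorm, if_neg h]
    have : (∑' j : ℕ, (ENNReal.ofReal ((2:ℝ) ^ (-(j:ℝ) * δ)) * c) ^ q.toReal) ^ (1/q.toReal)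
        = G * c := by
      change (∑' j : ℕ, (ENNReal.ofReal ((2:ℝ) ^ (-(j:ℝ) * δ)) * c) ^ t) ^ (1/t) = G * c
      simp_rw [ENNReal.mul_rpow_of_nonneg _ _ ht.le, ENNReal.tsum_mul_right,
        ENNReal.mul_rpow_of_nonneg _ _ (by positivity : (0:ℝ) ≤ 1/t), hG,
        ← ENNReal.rpow_mul c, mul_one_div, div_self ht.ne', ENNReal.rpow_one]
    rw [this]
    gcongr
    calc G = ENNReal.ofReal G.toReal := (ENNReal.ofReal_toReal hGfin).symm
      _ ≤ ENNReal.ofReal (max G.toReal 1) := ENNReal.ofReal_le_ofReal (le_max_left _ _)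
open scoped Classical

lemma levelNorm_zero_of (N : MultiscaleGrid Γ T d) {p : ℝ} (hp : 0 < p)
    {a : ℕ → Γ × T → ℂ} {j : ℕ} (ha : ∀ x, a j x = 0) : levelNorm N p a j = 0 := by
  unfold levelNorm
  have : ∀ ξ : N.grid j, (‖a j ↑ξ‖₊ : ℝ≥0∞) ^ p = 0 := by
    intro ξ
    rw [ha ↑ξ]
    simp [ENNReal.zero_rpow_of_pos hp]
  rw [tsum_congr this, tsum_zero, ENNReal.zero_rpow_of_pos (by positivity)]

lemma levelNorm_single (N : MultiscaleGrid Γ T d) {p : ℝ} (hp : 0 < p)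
    {a : ℕ → Γ × T → ℂ} {j : ℕ} {ξ₀ : Γ × T} (hξ₀ : ξ₀ ∈ N.grid j) {u : ℝ} (hu : 0 ≤ u)
    (ha : ∀ x, a j x = if x = ξ₀ then (u : ℂ) else 0) :
    levelNorm N p a j = ENNReal.ofReal u := by
  unfold levelNorm
  have hsum : (∑' ξ : N.grid j, (‖a j ↑ξ‖₊ : ℝ≥0∞) ^ p) = ENNReal.ofReal u ^ p := by
    rw [tsum_eq_single (⟨ξ₀, hξ₀⟩ : N.grid j)]
    · rw [ha ξ₀, if_pos rfl]
      congr 1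
      rw [← Real.enorm_eq_ofReal hu]
      congr 1
      exact Complex.nnnorm_real u ▸ rfl
    · intro b hb
      rw [ha ↑b, if_neg (fun h => hb (Subtype.ext h))]
      simp [ENNReal.zero_rpow_of_pos hp]
  rw [hsum, ← ENNReal.rpow_mul, mul_one_div, div_self hp.ne', ENNReal.rpow_one]

lemma levelNorm_embed (N : MultiscaleGrid Γ T d) {p : ℝ} (hp : 0 < p)
    {a : ℕ → Γ × T → ℂ} {j : ℕ} (e : ℕ ↪ N.grid j) {v : ℕ → ℝ} (hv : ∀ n, 0 ≤ v n)
    (ha : ∀ x, a j x = if h : ∃ n, (↑(e n) : Γ × T) = x then (v h.choose : ℂ) else 0) :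
    levelNorm N p a j = (∑' n : ℕ, ENNReal.ofReal (v n) ^ p) ^ (1/p) := by
  unfold levelNorm
  congr 1
  have hinj : Function.Injective (e : ℕ → N.grid j) := e.injective
  rw [← Function.Injective.tsum_eq hinj (f := fun ξ : N.grid j => (‖a j ↑ξ‖₊ : ℝ≥0∞) ^ p)]
  · apply tsum_congr
    intro n
    have hex : ∃ m, (↑(e m) : Γ × T) = ↑(e n) := ⟨n, rfl⟩
    rw [ha ↑(e n), dif_pos hex]
    have : hex.choose = n := by
      have h1 : (↑(e hex.choose) : Γ × T) = ↑(e n) := hex.choose_spec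
      exact hinj (Subtype.ext h1)
    rw [this]
    congr 1
    rw [← Real.enorm_eq_ofReal (hv n)]
    congr 1
    exact Complex.nnnorm_real (v n) ▸ rfl
  · intro ξ hξ
    by_contra hne
    apply hξ
    simp only [Function.mem_support, ne_eq, not_not] at *
    rw [ha ↑ξ]
    have : ¬ ∃ n, (↑(e n) : Γ × T) = ↑ξ := by
      intro ⟨n, hn⟩
      exact hne ⟨n, Subtype.ext hn⟩
    rw [dif_neg this]
    simp [ENNReal.zero_rpow_of_pos hp]

lemma besovWeight_zero (α p : ℝ) : besovWeight d α p 0 = 1 := by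
  simp [besovWeight]

lemma qnorm_single0 {q : ℝ≥0∞} (hq : 0 < q) {f : ℕ → ℝ≥0∞} (hf : ∀ j, j ≠ 0 → f j = 0) :
    qnorm q f = f 0 := by
  unfold qnorm
  split_ifs with h
  · refine le_antisymm (iSup_le fun j => ?_) (le_iSup f 0)
    rcases eq_or_ne j 0 with rfl | hj
    · exact le_rfl
    · rw [hf j hj]; exact zero_le
  · have ht : 0 < q.toReal := ENNReal.toReal_pos hq.ne' h
    rw [tsum_eq_single 0 (fun b hb => by rw [hf b hb, ENNReal.zero_rpow_of_pos ht]),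
      ← ENNReal.rpow_mul, mul_one_div, div_self ht.ne', ENNReal.rpow_one]

lemma summable_shift_rpow {s : ℝ} (hs : 1 < s) :
    Summable (fun n : ℕ => ((n : ℝ) + 1) ^ (-s)) := by
  have h : Summable (fun n : ℕ => ((n : ℝ) ^ s)⁻¹) := Real.summable_nat_rpow_inv.mpr hs
  have h2 := (summable_nat_add_iff 1).mpr h
  refine h2.congr fun n => ?_
  push_cast
  rw [← Real.rpow_neg (by positivity), Real.rpow_neg (by positivity)]

lemma tsum_ofReal_rpow_ne_top {s : ℝ} (hs : 1 < s) :
    (∑' n : ℕ, ENNReal.ofReal (((n : ℝ) + 1) ^ (-s))) ≠ ∞ := by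
  rw [← ENNReal.ofReal_tsum_of_nonneg (fun n => by positivity) (summable_shift_rpow hs)]
  exact ENNReal.ofReal_ne_top

lemma tsum_ofReal_harmonic_eq_top :
    (∑' n : ℕ, ENNReal.ofReal (((n : ℝ) + 1) ^ (-(1:ℝ)))) = ∞ := by
  by_contra h
  have h1 := ENNReal.summable_toReal h
  have h2 : Summable (fun n : ℕ => ((n : ℝ) + 1)⁻¹) := by
    refine h1.congr fun n => ?_
    rw [ENNReal.toReal_ofReal (by positivity), Real.rpow_neg_one]
  have h3 : Summable (fun n : ℕ => ((n : ℝ))⁻¹) := by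
    rw [← summable_nat_add_iff 1]
    refine h2.congr fun n => by push_cast; ring_nf
  exact Real.not_summable_natCast_inv h3

lemma besovNorm_single (N : MultiscaleGrid Γ T d) {p : ℝ} (hp : 0 < p) (q : ℝ≥0∞) (α' : ℝ)
    {ξ : ℕ → Γ × T} (hξ : ∀ j, ξ j ∈ N.grid j) {c : ℕ → ℝ} (hc : ∀ j, 0 ≤ c j) :
    besovNorm N α' p q (fun j x => if x = ξ j then ((c j : ℝ) : ℂ) else 0)
      = qnorm q (fun j =>
          ENNReal.ofReal ((2:ℝ) ^ ((j:ℝ) * (α' + d * (1/2 - 1/p))) * c j)) := by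
  rw [besovNorm_eq_qnorm]
  congr 1
  funext j
  rw [levelNorm_single N hp (hξ j) (hc j) (fun x => rfl), besovWeight,
    ← ENNReal.ofReal_mul (by positivity)]

lemma two_rpow_calc (e₀ e₁ : ℝ) (j : ℕ) (u : ℝ) :
    (2:ℝ) ^ ((j:ℝ) * e₁) * ((2:ℝ) ^ (-(j:ℝ) * e₀) * u) = (2:ℝ) ^ ((j:ℝ) * (e₁ - e₀)) * u := by
  rw [← mul_assoc, ← Real.rpow_add two_pos]
  ring_nf

lemma besov_embedding {Γ T : Type*} [MetricSpace Γ] [Fintype T] [Nonempty T]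
    {d : ℕ} (N : MultiscaleGrid Γ T d)
    {p₀ p₁ : ℝ} (hp₀ : 0 < p₀) (hp₁ : 0 < p₁)
    {q₀ q₁ : ℝ≥0∞} (hq₀ : 0 < q₀) (hq₁ : 0 < q₁) (α γ : ℝ)
    (hple : p₀ ≤ p₁)
    (hcond : d * max 0 (1 / p₀ - 1 / p₁) < γ ∨
      (γ = d * max 0 (1 / p₀ - 1 / p₁) ∧ q₀ ≤ q₁)) :
    ∃ c : ℝ, 0 < c ∧ ∀ a : ℕ → Γ × T → ℂ,
      besovNorm N α p₁ q₁ a ≤ ENNReal.ofReal c * besovNorm N (α + γ) p₀ q₀ a := by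
  have hmax : max 0 (1 / p₀ - 1 / p₁) = 1 / p₀ - 1 / p₁ :=
    max_eq_right (by
      have : 1 / p₁ ≤ 1 / p₀ := one_div_le_one_div_of_le hp₀ hple
      linarith)
  set δ := γ - d * (1 / p₀ - 1 / p₁) with hδ
  have hw : ∀ j : ℕ, besovWeight d α p₁ j
      = ENNReal.ofReal ((2:ℝ) ^ (-(j:ℝ) * δ)) * besovWeight d (α + γ) p₀ j := by
    intro j
    rw [besovWeight, besovWeight, ← ENNReal.ofReal_mul (by positivity),
      ← Real.rpow_add two_pos]
    congr 1
    rw [hδ]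
    ring_nf
  have hL : ∀ (a : ℕ → Γ × T → ℂ) (j : ℕ), levelNorm N p₁ a j ≤ levelNorm N p₀ a j := by
    intro a j
    exact lp_mono (fun ξ : N.grid j => (‖a j ↑ξ‖₊ : ℝ≥0∞)) hp₀ hple
  rcases hcond with hgt | ⟨heq, hqq⟩
  · -- δ > 0
    have hδpos : 0 < δ := by rw [hδ]; rw [hmax] at hgt; linarith
    obtain ⟨K, hK, hgeom⟩ := qnorm_geom hq₁ hδpos
    refine ⟨K, hK, fun a => ?_⟩
    rw [besovNorm_eq_qnorm, besovNorm_eq_qnorm]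
    set S := qnorm q₀ (fun j => besovWeight d (α + γ) p₀ j * levelNorm N p₀ a j) with hS
    calc qnorm q₁ (fun j => besovWeight d α p₁ j * levelNorm N p₁ a j)
        ≤ qnorm q₁ (fun j => ENNReal.ofReal ((2:ℝ) ^ (-(j:ℝ) * δ)) * S) := by
          refine qnorm_mono_fn fun j => ?_
          rw [hw j, mul_assoc]
          refine mul_le_mul_right ?_ _
          calc besovWeight d (α + γ) p₀ j * levelNorm N p₁ a j
              ≤ besovWeight d (α + γ) p₀ j * levelNorm N p₀ a j :=
                mul_le_mul_right (hL a j) _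
            _ ≤ S := term_le_qnorm hq₀ _ j
      _ ≤ ENNReal.ofReal K * S := hgeom S
  · -- δ = 0, q₀ ≤ q₁
    have hδ0 : δ = 0 := by rw [hδ]; rw [hmax] at heq; linarith
    refine ⟨1, one_pos, fun a => ?_⟩
    rw [ENNReal.ofReal_one, one_mul, besovNorm_eq_qnorm, besovNorm_eq_qnorm]
    calc qnorm q₁ (fun j => besovWeight d α p₁ j * levelNorm N p₁ a j)
        ≤ qnorm q₁ (fun j => besovWeight d (α + γ) p₀ j * levelNorm N p₀ a j) := by
          refine qnorm_mono_fn fun j => ?_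
          rw [hw j, hδ0]
          simp only [mul_zero, neg_mul, neg_zero, Real.rpow_zero, ENNReal.ofReal_one, one_mul]
          exact mul_le_mul_right (hL a j) _
      _ ≤ qnorm q₀ _ := qnorm_mono_q hq₀ hqq _

lemma besov_counterexample {Γ T : Type*} [MetricSpace Γ] [Fintype T] [Nonempty T]
    {d : ℕ} (N : MultiscaleGrid Γ T d) (hA4b : A4b N)
    {p₀ p₁ : ℝ} (hp₀ : 0 < p₀) (hp₁ : 0 < p₁)
    {q₀ q₁ : ℝ≥0∞} (hq₀ : 0 < q₀) (hq₁ : 0 < q₁) (α γ : ℝ)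
    (hP : ¬ (p₀ ≤ p₁ ∧ (d * max 0 (1 / p₀ - 1 / p₁) < γ ∨
      (γ = d * max 0 (1 / p₀ - 1 / p₁) ∧ q₀ ≤ q₁)))) :
    ∃ a : ℕ → Γ × T → ℂ,
      besovNorm N (α + γ) p₀ q₀ a < ∞ ∧ besovNorm N α p₁ q₁ a = ∞ := by
  by_cases hple : p₀ ≤ p₁
  case neg =>
    -- Case A : p₁ < p₀; counterexample supported on level 0
    push_neg at hple
    set e : ℕ ↪ N.grid 0 := (hA4b 0).natEmbedding _ with he
    set v : ℕ → ℝ := fun n => ((n:ℝ) + 1) ^ (-(1/p₁)) with hv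
    have hv0 : ∀ n, 0 ≤ v n := fun n => by rw [hv]; positivity
    set a : ℕ → Γ × T → ℂ := fun j x =>
      if j = 0 then (if h : ∃ n, (↑(e n) : Γ × T) = x then (v h.choose : ℂ) else 0) else 0
      with ha
    have hlevel : ∀ p : ℝ, 0 < p → ∀ α' : ℝ, ∀ q : ℝ≥0∞, 0 < q →
        besovNorm N α' p q a = (∑' n : ℕ, ENNReal.ofReal (v n) ^ p) ^ (1/p) := by
      intro p hp α' q hq
      rw [besovNorm_eq_qnorm, qnorm_single0 hq]
      · rw [besovWeight_zero, one_mul]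
        exact levelNorm_embed N hp e hv0 (fun x => by rw [ha]; exact if_pos rfl)
      · intro j hj
        rw [levelNorm_zero_of N hp (fun x => by rw [ha]; simp [hj]), mul_zero]
    have hsum : ∀ p : ℝ, 0 < p →
        (∑' n : ℕ, ENNReal.ofReal (v n) ^ p)
          = ∑' n : ℕ, ENNReal.ofReal (((n:ℝ) + 1) ^ (-(p/p₁))) := by
      intro p hp
      refine tsum_congr fun n => ?_
      rw [hv, ENNReal.ofReal_rpow_of_nonneg (by positivity) hp.le]
      congr 1
      rw [← Real.rpow_mul (by positivity)]
      congr 1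
      ring
    refine ⟨a, ?_, ?_⟩
    · rw [hlevel p₀ hp₀ _ q₀ hq₀, hsum p₀ hp₀]
      exact ENNReal.rpow_lt_top_of_nonneg (by positivity)
        (tsum_ofReal_rpow_ne_top (by rw [lt_div_iff₀ hp₁] at *; linarith))
    · rw [hlevel p₁ hp₁ _ q₁ hq₁, hsum p₁ hp₁]
      rw [show -(p₁/p₁) = -(1:ℝ) by rw [div_self hp₁.ne']]
      rw [tsum_ofReal_harmonic_eq_top, ENNReal.top_rpow_of_pos (by positivity)]
  case pos =>
    have hmax : max 0 (1 / p₀ - 1 / p₁) = 1 / p₀ - 1 / p₁ :=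
      max_eq_right (by
        have : 1 / p₁ ≤ 1 / p₀ := one_div_le_one_div_of_le hp₀ hple
        linarith)
    set δ := γ - d * (1 / p₀ - 1 / p₁) with hδ
    have hcase : δ < 0 ∨ (δ = 0 ∧ q₁ < q₀) := by
      push_neg at hP
      obtain ⟨h1, h2⟩ := hP hple
      rw [hmax] at h1 h2
      rcases lt_or_eq_of_le h1 with h | h
      · left; rw [hδ]; linarith
      · right
        refine ⟨by rw [hδ, h, sub_self], h2 h⟩
    -- one-point-per-level counterexamples
    set ξ : ℕ → Γ × T := fun j => ((hA4b j).nonempty).choose with hξdef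
    have hξ : ∀ j, ξ j ∈ N.grid j := fun j => ((hA4b j).nonempty).choose_spec
    set e₀ : ℝ := α + γ + d * (1/2 - 1/p₀) with he₀
    set e₁ : ℝ := α + d * (1/2 - 1/p₁) with he₁
    have hee : e₁ - e₀ = -δ := by rw [he₁, he₀, hδ]; ring
    rcases hcase with hδneg | ⟨hδ0, hqlt⟩
    · -- B1 : δ < 0
      set δ' : ℝ := -δ/2 with hδ'
      have hδ'pos : 0 < δ' := hδ' ▸ div_pos (neg_pos.mpr hδneg) two_pos
      set u : ℕ → ℝ := fun j => (2:ℝ) ^ (-(j:ℝ) * δ') with hu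
      have hu0 : ∀ j, 0 ≤ u j := fun j => by rw [hu]; positivity
      set c : ℕ → ℝ := fun j => (2:ℝ) ^ (-(j:ℝ) * e₀) * u j with hc
      have hc0 : ∀ j, 0 ≤ c j := fun j => by rw [hc]; positivity
      refine ⟨fun j x => if x = ξ j then ((c j : ℝ) : ℂ) else 0, ?_, ?_⟩
      · rw [besovNorm_single N hp₀ q₀ (α + γ) hξ hc0]
        have hterm : ∀ j : ℕ,
            ENNReal.ofReal ((2:ℝ) ^ ((j:ℝ) * ((α + γ) + d * (1/2 - 1/p₀))) * c j)
              = ENNReal.ofReal ((2:ℝ) ^ (-(j:ℝ) * δ')) * 1 := by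
          intro j
          have h' : (2:ℝ) ^ ((j:ℝ) * ((α + γ) + d * (1/2 - 1/p₀))) * c j = u j := by
            rw [hc, show (α + γ) + d * (1/2 - 1/p₀) = e₀ by rw [he₀],
              two_rpow_calc, sub_self, mul_zero, Real.rpow_zero, one_mul]
          rw [h', mul_one, hu]
        rw [show (fun j : ℕ => ENNReal.ofReal ((2:ℝ) ^ ((j:ℝ) * ((α + γ) + d * (1/2 - 1/p₀))) * c j))
            = fun j : ℕ => ENNReal.ofReal ((2:ℝ) ^ (-(j:ℝ) * δ')) * 1 from funext hterm]
        obtain ⟨K, hK, hgeom⟩ := qnorm_geom hq₀ hδ'pos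
        calc qnorm q₀ _ ≤ ENNReal.ofReal K * 1 := hgeom 1
          _ < ∞ := by simp [ENNReal.ofReal_lt_top]
      · rw [besovNorm_single N hp₁ q₁ α hξ hc0]
        refine qnorm_eq_top_of_unbounded hq₁ fun C hC => ?_
        have hbase : 1 < (2:ℝ) ^ δ' :=
          Real.one_lt_rpow_iff_of_pos two_pos |>.mpr (Or.inl ⟨one_lt_two, hδ'pos⟩)
        obtain ⟨n, hn⟩ := pow_unbounded_of_one_lt C.toReal hbase
        refine ⟨n, ?_⟩
        have hterm : (2:ℝ) ^ ((n:ℝ) * (α + d * (1/2 - 1/p₁))) * c n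
            = ((2:ℝ) ^ δ') ^ n := by
          rw [hc, show α + d * (1/2 - 1/p₁) = e₁ by rw [he₁], two_rpow_calc, hu,
            ← Real.rpow_add two_pos]
          rw [← Real.rpow_natCast ((2:ℝ) ^ δ') n, ← Real.rpow_mul (by norm_num)]
          congr 1
          have : e₁ - e₀ = 2 * δ' := by rw [hee, hδ']; ring
          rw [this]
          ring
        rw [hterm]
        exact (ENNReal.lt_ofReal_iff_toReal_lt hC.ne).mpr hn
    · -- B2 : δ = 0 and q₁ < q₀
      have hq₁top : q₁ ≠ ∞ := hqlt.ne_top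
      set t₁ : ℝ := q₁.toReal with ht₁def
      have ht₁ : 0 < t₁ := ENNReal.toReal_pos hq₁.ne' hq₁top
      set u : ℕ → ℝ := fun j => ((j:ℝ) + 1) ^ (-(1/t₁)) with hu
      have hu0 : ∀ j, 0 ≤ u j := fun j => by rw [hu]; positivity
      have hu1 : ∀ j, u j ≤ 1 := fun j => by
        rw [hu]
        exact Real.rpow_le_one_of_one_le_of_nonpos (by push_cast; linarith)
          (by rw [neg_nonpos]; positivity)
      set c : ℕ → ℝ := fun j => (2:ℝ) ^ (-(j:ℝ) * e₀) * u j with hc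
      have hc0 : ∀ j, 0 ≤ c j := fun j => by rw [hc]; positivity
      have hterm : ∀ (ee : ℝ), ee = e₀ → ∀ j : ℕ,
          ENNReal.ofReal ((2:ℝ) ^ ((j:ℝ) * ee) * c j) = ENNReal.ofReal (u j) := by
        intro ee hee' j
        rw [hc, hee', two_rpow_calc, sub_self, mul_zero, Real.rpow_zero, one_mul]
      have he₁e₀ : e₁ = e₀ := by
        have : e₁ - e₀ = 0 := by rw [hee, hδ0, neg_zero]
        linarith
      refine ⟨fun j x => if x = ξ j then ((c j : ℝ) : ℂ) else 0, ?_, ?_⟩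
      · rw [besovNorm_single N hp₀ q₀ (α + γ) hξ hc0]
        rw [show (fun j : ℕ => ENNReal.ofReal
              ((2:ℝ) ^ ((j:ℝ) * ((α + γ) + d * (1/2 - 1/p₀))) * c j))
            = fun j : ℕ => ENNReal.ofReal (u j) from
          funext (hterm _ (by rw [he₀]))]
        rcases eq_or_ne q₀ ∞ with h | h
        · rw [qnorm, if_pos h]
          calc (⨆ j, ENNReal.ofReal (u j)) ≤ 1 :=
                iSup_le fun j => ENNReal.ofReal_le_one.mpr (hu1 j)
            _ < ∞ := ENNReal.one_lt_top
        · have ht₀ : 0 < q₀.toReal := ENNReal.toReal_pos hq₀.ne' h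
          have hst : 1 < q₀.toReal / t₁ := by
            rw [lt_div_iff₀ ht₁, one_mul, ht₁def]
            exact (ENNReal.toReal_lt_toReal hq₁top h).mpr hqlt
          rw [qnorm, if_neg h]
          refine ENNReal.rpow_lt_top_of_nonneg (by positivity) ?_
          have : ∀ j : ℕ, ENNReal.ofReal (u j) ^ q₀.toReal
              = ENNReal.ofReal (((j:ℝ) + 1) ^ (-(q₀.toReal/t₁))) := by
            intro j
            rw [hu, ENNReal.ofReal_rpow_of_nonneg (by positivity) ht₀.le]
            congr 1
            rw [← Real.rpow_mul (by positivity)]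
            congr 1
            field_simp
          rw [tsum_congr this]
          exact tsum_ofReal_rpow_ne_top hst
      · rw [besovNorm_single N hp₁ q₁ α hξ hc0]
        rw [show (fun j : ℕ => ENNReal.ofReal ((2:ℝ) ^ ((j:ℝ) * (α + d * (1/2 - 1/p₁))) * c j))
            = fun j : ℕ => ENNReal.ofReal (u j) from
          funext (hterm _ (by rw [← he₁e₀, he₁]))]
        rw [qnorm, if_neg hq₁top]
        have : ∀ j : ℕ, ENNReal.ofReal (u j) ^ q₁.toReal
            = ENNReal.ofReal (((j:ℝ) + 1) ^ (-(1:ℝ))) := by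
          intro j
          rw [hu, ENNReal.ofReal_rpow_of_nonneg (by positivity) ht₁.le]
          congr 1
          rw [← Real.rpow_mul (by positivity)]
          congr 1
          field_simp
        rw [tsum_congr this, tsum_ofReal_harmonic_eq_top,
          ENNReal.top_rpow_of_pos (by positivity)]

/-- Proposition 2.4, unbounded case: for a multiscale grid satisfying (A4b), the embedding
`b^{α+γ}_{p₀,q₀}(∇) ⊆ b^{α}_{p₁,q₁}(∇)` exists as a set-theoretic inclusion iff it is
continuous iff `p₀ ≤ p₁` and in addition `γ > d·max{0, 1/p₀ − 1/p₁}`, or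
`γ = d·max{0, 1/p₀ − 1/p₁}` with `q₀ ≤ q₁`. -/
theorem besov_seq_embedding_unbounded
    {Γ T : Type*} [MetricSpace Γ] [Nonempty Γ] [Fintype T] [Nonempty T]
    {d : ℕ} (hd : 0 < d) (N : MultiscaleGrid Γ T d) (hA4b : A4b N)
    (p₀ p₁ : ℝ) (hp₀ : 0 < p₀) (hp₁ : 0 < p₁)
    (q₀ q₁ : ℝ≥0∞) (hq₀ : 0 < q₀) (hq₁ : 0 < q₁) (α γ : ℝ) :
    (besovSpace N (α + γ) p₀ q₀ ⊆ besovSpace N α p₁ q₁ ↔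
      (p₀ ≤ p₁ ∧ (d * max 0 (1 / p₀ - 1 / p₁) < γ ∨
        (γ = d * max 0 (1 / p₀ - 1 / p₁) ∧ q₀ ≤ q₁)))) ∧
    ((∃ c : ℝ, 0 < c ∧ ∀ a : ℕ → Γ × T → ℂ,
        besovNorm N α p₁ q₁ a ≤ ENNReal.ofReal c * besovNorm N (α + γ) p₀ q₀ a) ↔
      (p₀ ≤ p₁ ∧ (d * max 0 (1 / p₀ - 1 / p₁) < γ ∨
        (γ = d * max 0 (1 / p₀ - 1 / p₁) ∧ q₀ ≤ q₁)))) := by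
  have hbound : ∀ (c : ℝ) (x y : ℝ≥0∞), x ≤ ENNReal.ofReal c * y → y < ∞ → x < ∞ :=
    fun c x y hxy hy => lt_of_le_of_lt hxy (ENNReal.mul_lt_top ENNReal.ofReal_lt_top hy)
  constructor
  · constructor
    · intro hsub
      by_contra hP
      obtain ⟨a, h0, h1⟩ := besov_counterexample N hA4b hp₀ hp₁ hq₀ hq₁ α γ hP
      have := hsub (h0 : a ∈ besovSpace N (α + γ) p₀ q₀)
      rw [besovSpace, Set.mem_setOf_eq, h1] at this
      exact lt_irrefl ∞ this
    · rintro ⟨hple, hcond⟩ a ha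
      obtain ⟨c, hc, hb⟩ := besov_embedding N hp₀ hp₁ hq₀ hq₁ α γ hple hcond
      exact hbound c _ _ (hb a) ha
  · constructor
    · rintro ⟨c, hc, hb⟩
      by_contra hP
      obtain ⟨a, h0, h1⟩ := besov_counterexample N hA4b hp₀ hp₁ hq₀ hq₁ α γ hP
      exact absurd (h1 ▸ hbound c _ _ (hb a) h0) (lt_irrefl ∞)
    · rintro ⟨hple, hcond⟩
      exact besov_embedding N hp₀ hp₁ hq₀ hq₁ α γ hple hcond
end
end

section
/- Let ∇⁰,∇¹ be multiscale grids of dimension d∈ℕ for Γ, let 0<p≤1, and let M = {m_{(j,ξ),(k,η)}} satisfy the ad^{0,0}_p condition with a witness ε>0. Let r satisfy pd/(εp+d) < r < p, and define M̃ = M̃(r) by m̃_{(j,ξ),(k,η)} := 2^{(k−j)d(1/2−r/2)}·|m_{(j,ξ),(k,η)}|^r. Then M̃ belongs to ad^{0,0}_{p/r}, with witness ε̃ := εr + d(r/p − 1) > 0. -/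
open scoped ENNReal NNReal BigOperators

noncomputable section

variable {Γ T : Type*} [MetricSpace Γ] [Fintype T] [Nonempty T] {d : ℕ}

/-- Key real inequality for the power trick. -/
lemma key_power_ineq {d ε εt σ r x y D : ℝ}
    (hd : 0 ≤ d) (hεt : 0 < εt) (hεtr : εt ≤ ε * r) (hr : 0 < r) (hD : 1 ≤ D)
    (hE : (d + ε + σ) * r = d + εt) :
    (2:ℝ) ^ (((y - x) * d) * (1/2 - r/2)) *
      (min ((2:ℝ) ^ (-(x - y) * (d/2 + ε))) ((2:ℝ) ^ ((x - y) * (d/2 + ε + σ))) /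
        D ^ (d + ε + σ)) ^ r
    ≤ min ((2:ℝ) ^ (-(x - y) * (d/2 + εt))) ((2:ℝ) ^ ((x - y) * (d/2 + εt))) /
        D ^ (d + εt) := by
  have hD0 : (0:ℝ) < D := lt_of_lt_of_le one_pos hD
  have h2 : (0:ℝ) < 2 := two_pos
  have hmin : (0:ℝ) ≤ min ((2:ℝ) ^ (-(x - y) * (d/2 + ε))) ((2:ℝ) ^ ((x - y) * (d/2 + ε + σ))) :=
    le_min (Real.rpow_nonneg (by norm_num) _) (Real.rpow_nonneg (by norm_num) _)
  rw [Real.div_rpow hmin (Real.rpow_nonneg hD0.le _), ← Real.rpow_mul hD0.le, hE,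
    mul_div_assoc']
  rw [div_le_div_iff_of_pos_right (Real.rpow_pos_of_pos hD0 _)]
  have hεt2 : (0:ℝ) ≤ d/2 + εt := by nlinarith
  rcases le_total x y with hxy | hyx
  · calc (2:ℝ) ^ (((y - x) * d) * (1/2 - r/2)) *
        min ((2:ℝ) ^ (-(x - y) * (d/2 + ε))) ((2:ℝ) ^ ((x - y) * (d/2 + ε + σ))) ^ r
        ≤ (2:ℝ) ^ (((y - x) * d) * (1/2 - r/2)) * ((2:ℝ) ^ ((x - y) * (d/2 + ε + σ))) ^ r := by
          apply mul_le_mul_of_nonneg_left _ (Real.rpow_nonneg (by norm_num) _)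
          exact Real.rpow_le_rpow hmin (min_le_right _ _) hr.le
      _ = (2:ℝ) ^ (((y - x) * d) * (1/2 - r/2) + ((x - y) * (d/2 + ε + σ)) * r) := by
          rw [← Real.rpow_mul (by norm_num : (0:ℝ) ≤ 2), ← Real.rpow_add h2]
      _ = (2:ℝ) ^ ((x - y) * (d/2 + εt)) := by
          congr 1; linear_combination (x - y) * hE
      _ ≤ min ((2:ℝ) ^ (-(x - y) * (d/2 + εt))) ((2:ℝ) ^ ((x - y) * (d/2 + εt))) := by
          refine le_min ?_ le_rfl
          apply Real.rpow_le_rpow_of_exponent_le one_le_two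
          nlinarith
  · calc (2:ℝ) ^ (((y - x) * d) * (1/2 - r/2)) *
        min ((2:ℝ) ^ (-(x - y) * (d/2 + ε))) ((2:ℝ) ^ ((x - y) * (d/2 + ε + σ))) ^ r
        ≤ (2:ℝ) ^ (((y - x) * d) * (1/2 - r/2)) * ((2:ℝ) ^ (-(x - y) * (d/2 + ε))) ^ r := by
          apply mul_le_mul_of_nonneg_left _ (Real.rpow_nonneg (by norm_num) _)
          exact Real.rpow_le_rpow hmin (min_le_left _ _) hr.le
      _ = (2:ℝ) ^ (((y - x) * d) * (1/2 - r/2) + (-(x - y) * (d/2 + ε)) * r) := by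
          rw [← Real.rpow_mul (by norm_num : (0:ℝ) ≤ 2), ← Real.rpow_add h2]
      _ ≤ (2:ℝ) ^ (-(x - y) * (d/2 + εt)) := by
          apply Real.rpow_le_rpow_of_exponent_le one_le_two
          nlinarith [mul_nonneg (sub_nonneg.mpr hyx) (sub_nonneg.mpr hεtr)]
      _ ≤ min ((2:ℝ) ^ (-(x - y) * (d/2 + εt))) ((2:ℝ) ^ ((x - y) * (d/2 + εt))) := by
          refine le_min le_rfl ?_
          apply Real.rpow_le_rpow_of_exponent_le one_le_two
          nlinarith

/-- Step 2 in the proof of Theorem 2.7: if `M` satisfies the `ad^{0,0}_p` condition with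
witness `ε > 0` and `pd/(εp+d) < r < p ≤ 1`, then the modified matrix
`m̃ = 2^{(k−j)d(1/2−r/2)}|m|^r` satisfies the `ad^{0,0}_{p/r}` condition with witness
`ε̃ = εr + d(r/p − 1) > 0`. -/
theorem almost_diagonal_power_trick
    {Γ T : Type*} [MetricSpace Γ] [Nonempty Γ] [Fintype T] [Nonempty T]
    {d : ℕ} (hd : 0 < d) (N0 N1 : MultiscaleGrid Γ T d)
    (p : ℝ) (hp0 : 0 < p) (hp1 : p ≤ 1) (ε : ℝ) (hε : 0 < ε)
    (m : ℕ → Γ × T → ℕ → Γ × T → ℂ)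
    (hm : ∃ C > 0, adBound N0 N1 0 0 p ε C m)
    (r : ℝ) (hr1 : p * d / (ε * p + d) < r) (hr2 : r < p) :
    0 < ε * r + d * (r / p - 1) ∧
    ∃ C > 0, adBound N0 N1 0 0 (p / r) (ε * r + d * (r / p - 1)) C
      (fun j ξ k η =>
        ((((2 : ℝ) ^ ((((k : ℝ) - (j : ℝ)) * d) * (1 / 2 - r / 2)) *
            ‖m j ξ k η‖ ^ r : ℝ) : ℂ))) := by
  obtain ⟨C, hC, hbd⟩ := hm
  have hdpos : (0:ℝ) < (d:ℝ) := by exact_mod_cast hd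
  have hεpd : (0:ℝ) < ε * p + d := by positivity
  have hr0 : (0:ℝ) < r := lt_trans (by positivity) hr1
  have hpd : p * (d:ℝ) < r * (ε * p + d) := (div_lt_iff₀ hεpd).mp hr1
  have hεteq : ε * r + (d:ℝ) * (r / p - 1) = (r * (ε * p + d) - p * d) / p := by
    field_simp; ring
  have hεt : 0 < ε * r + (d:ℝ) * (r / p - 1) := by
    rw [hεteq]; exact div_pos (sub_pos.mpr hpd) hp0
  refine ⟨hεt, C ^ r, Real.rpow_pos_of_pos hC r, ?_⟩
  intro j ξ hξ k η hη
  have hW := hbd j ξ hξ k η hη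
  -- rewrite the sigmas
  have hσp : sigmaP d p = (d:ℝ) * (1 / p - 1) := by
    rw [sigmaP, max_eq_left (by rw [sub_nonneg]; exact one_le_one_div hp0 hp1)]
  have hσpr : sigmaP d (p / r) = 0 := by
    rw [sigmaP, max_eq_right, mul_zero]
    rw [one_div_div, sub_nonpos]
    exact (div_le_one hp0).mpr hr2.le
  have hWnn : 0 ≤ adWeight d p 0 0 ε j ξ k η := by
    rw [adWeight]
    apply div_nonneg (mul_nonneg (Real.rpow_nonneg (by norm_num) _)
      (le_min (Real.rpow_nonneg (by norm_num) _) (Real.rpow_nonneg (by norm_num) _)))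
    apply Real.rpow_nonneg
    have : (0:ℝ) ≤ min ((2:ℝ) ^ k) ((2:ℝ) ^ j) * dist ξ.1 η.1 := by positivity
    linarith
  have hD : (1:ℝ) ≤ 1 + min ((2:ℝ) ^ k) ((2:ℝ) ^ j) * dist ξ.1 η.1 := by
    have : (0:ℝ) ≤ min ((2:ℝ) ^ k) ((2:ℝ) ^ j) * dist ξ.1 η.1 := by positivity
    linarith
  have hE : ((d:ℝ) + ε + sigmaP d p) * r = (d:ℝ) + (ε * r + d * (r / p - 1)) := by
    rw [hσp]; field_simp; ring
  have hεtr : ε * r + (d:ℝ) * (r / p - 1) ≤ ε * r := by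
    have h1 : r / p - 1 ≤ 0 := by rw [sub_nonpos]; exact (div_le_one hp0).mpr hr2.le
    nlinarith
  have hkey : (2:ℝ) ^ ((((k:ℝ) - (j:ℝ)) * d) * (1 / 2 - r / 2)) *
      (adWeight d p 0 0 ε j ξ k η) ^ r
      ≤ adWeight d (p / r) 0 0 (ε * r + d * (r / p - 1)) j ξ k η := by
    rw [adWeight, adWeight, hσpr, add_zero, add_zero, mul_zero, mul_zero, sub_zero,
      Real.rpow_zero, one_mul, one_mul]
    exact key_power_ineq hdpos.le hεt hεtr hr0 hD hE
  have hXnn : (0:ℝ) ≤ (2:ℝ) ^ ((((k:ℝ) - (j:ℝ)) * d) * (1 / 2 - r / 2)) * ‖m j ξ k η‖ ^ r := by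
    positivity
  rw [Complex.norm_real, Real.norm_eq_abs, abs_of_nonneg hXnn]
  calc (2:ℝ) ^ ((((k:ℝ) - (j:ℝ)) * d) * (1 / 2 - r / 2)) * ‖m j ξ k η‖ ^ r
      ≤ (2:ℝ) ^ ((((k:ℝ) - (j:ℝ)) * d) * (1 / 2 - r / 2)) *
        (C * adWeight d p 0 0 ε j ξ k η) ^ r := by
        apply mul_le_mul_of_nonneg_left _ (Real.rpow_nonneg (by norm_num) _)
        exact Real.rpow_le_rpow (norm_nonneg _) hW hr0.le
    _ = C ^ r * ((2:ℝ) ^ ((((k:ℝ) - (j:ℝ)) * d) * (1 / 2 - r / 2)) *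
        (adWeight d p 0 0 ε j ξ k η) ^ r) := by
        rw [Real.mul_rpow hC.le hWnn]; ring
    _ ≤ C ^ r * adWeight d (p / r) 0 0 (ε * r + d * (r / p - 1)) j ξ k η :=
        mul_le_mul_of_nonneg_left hkey (Real.rpow_nonneg hC.le _)
end
end

section
/- Let ∇⁰,∇¹ be multiscale grids of dimension d∈ℕ for Γ, let α ≥ 0 and set τ := (α/d + 1/2)^{−1}, so that σ_τ = 0 if 0 ≤ α ≤ d/2 and σ_τ = α − d/2 if α > d/2. Suppose a matrix M = {m_{(j,ξ),(k,η)}}_{(j,ξ)∈∇¹,(k,η)∈∇⁰} satisfies: (i) there is c' > 0 such that m_{(j,ξ),(k,η)} = 0 whenever dist(ξ,η) > c'·(2^{−j} + 2^{−k}); and (ii) there are ε>0 and C>0 with |m_{(j,ξ),(k,η)}| ≤ C·min{2^{−(j−k)(d/2+α+ε)}, 2^{(j−k)(d/2−α+ε+σ_τ)}} for all (j,ξ)∈∇¹, (k,η)∈∇⁰. Then M ∈ ad^{α,α}_τ, and consequently M ∈ ad^{α,α}_p for every p with τ ≤ p < ∞. -/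
open scoped ENNReal NNReal BigOperators

noncomputable section

variable {Γ T : Type*} [MetricSpace Γ] [Fintype T] [Nonempty T] {d : ℕ}

/-- Steps 1–3 in the proof of Theorem 4.2: let `α ≥ 0`, `τ = (α/d + 1/2)^{−1}`. If the
matrix `M` vanishes whenever `dist(ξ,η) > c'(2^{−j}+2^{−k})` and satisfies
`|m_{(j,ξ),(k,η)}| ≤ C·min{2^{−(j−k)(d/2+α+ε)}, 2^{(j−k)(d/2−α+ε+σ_τ)}}`, then
`M ∈ ad^{α,α}_τ`, and consequently `M ∈ ad^{α,α}_p` for every `τ ≤ p < ∞`. -/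
theorem almost_diagonal_of_local_support
    {Γ T : Type*} [MetricSpace Γ] [Nonempty Γ] [Fintype T] [Nonempty T]
    {d : ℕ} (hd : 0 < d) (N0 N1 : MultiscaleGrid Γ T d)
    (α : ℝ) (hα : 0 ≤ α) (τ : ℝ) (hτ : τ = (α / d + 1 / 2)⁻¹)
    (m : ℕ → Γ × T → ℕ → Γ × T → ℂ) (c' : ℝ) (hc' : 0 < c')
    (hsupp : ∀ j : ℕ, ∀ ξ ∈ N1.grid j, ∀ k : ℕ, ∀ η ∈ N0.grid k,
      c' * ((2 : ℝ) ^ (-(j : ℝ)) + (2 : ℝ) ^ (-(k : ℝ))) < dist ξ.1 η.1 → m j ξ k η = 0)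
    (hbd : ∃ ε > 0, ∃ C > 0, ∀ j : ℕ, ∀ ξ ∈ N1.grid j, ∀ k : ℕ, ∀ η ∈ N0.grid k,
      ‖m j ξ k η‖ ≤ C *
        min ((2 : ℝ) ^ (-((j : ℝ) - (k : ℝ)) * ((d : ℝ) / 2 + α + ε)))
            ((2 : ℝ) ^ (((j : ℝ) - (k : ℝ)) * ((d : ℝ) / 2 - α + ε + sigmaP d τ)))) :
    isAlmostDiagonal N0 N1 α α τ m ∧
      ∀ p : ℝ, τ ≤ p → isAlmostDiagonal N0 N1 α α p m := by

  -- Basic positivity facts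
  have hd' : (0:ℝ) < d := by exact_mod_cast hd
  have hτpos : 0 < τ := by
    rw [hτ]
    have : 0 < α / d + 1 / 2 := by positivity
    exact inv_pos.mpr this
  obtain ⟨ε, hε, C, hC, hbd⟩ := hbd
  set K : ℝ := (1 + 2 * c') ^ ((d:ℝ) + ε + sigmaP d τ) with hK
  have hKpos : 0 < K := Real.rpow_pos_of_pos (by linarith) _
  have hστ0 : 0 ≤ sigmaP d τ := mul_nonneg (Nat.cast_nonneg d) (le_max_right _ _)
  -- main helper: adBound for any p with σ_p ≤ σ_τ
  have key : ∀ p : ℝ, 0 ≤ sigmaP d p → sigmaP d p ≤ sigmaP d τ →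
      adBound N0 N1 α α p ε (C * K) m := by
    intro p hσ0 hσle j ξ hξ k η hη
    by_cases hfar : c' * ((2 : ℝ) ^ (-(j : ℝ)) + (2 : ℝ) ^ (-(k : ℝ))) < dist ξ.1 η.1
    · rw [hsupp j ξ hξ k η hη hfar, norm_zero]
      have hw : 0 ≤ adWeight d p α α ε j ξ k η := by
        unfold adWeight
        have hbase : (0:ℝ) < 1 + min ((2 : ℝ) ^ k) ((2 : ℝ) ^ j) * dist ξ.1 η.1 := by
          have : 0 ≤ min ((2 : ℝ) ^ k) ((2 : ℝ) ^ j) * dist ξ.1 η.1 :=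
            mul_nonneg (le_min (by positivity) (by positivity)) dist_nonneg
          linarith
        apply div_nonneg
        · exact mul_nonneg (Real.rpow_nonneg (by norm_num) _)
            (le_min (Real.rpow_nonneg (by norm_num) _) (Real.rpow_nonneg (by norm_num) _))
        · exact (Real.rpow_pos_of_pos hbase _).le
      positivity
    · push_neg at hfar
      -- distance bound on the support
      have hmin_le : min ((2:ℝ)^k) ((2:ℝ)^j) * dist ξ.1 η.1 ≤ 2 * c' := by
        have h1 : min ((2:ℝ)^k) ((2:ℝ)^j) * (2:ℝ)^(-(j:ℝ)) ≤ 1 := by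
          have he : ((2:ℝ)^j) * (2:ℝ)^(-(j:ℝ)) = 1 := by
            rw [← Real.rpow_natCast 2 j, ← Real.rpow_add two_pos]
            simp
          calc min ((2:ℝ)^k) ((2:ℝ)^j) * (2:ℝ)^(-(j:ℝ))
              ≤ ((2:ℝ)^j) * (2:ℝ)^(-(j:ℝ)) :=
                mul_le_mul_of_nonneg_right (min_le_right _ _) (Real.rpow_nonneg (by norm_num) _)
            _ = 1 := he
        have h2 : min ((2:ℝ)^k) ((2:ℝ)^j) * (2:ℝ)^(-(k:ℝ)) ≤ 1 := by
          have he : ((2:ℝ)^k) * (2:ℝ)^(-(k:ℝ)) = 1 := by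
            rw [← Real.rpow_natCast 2 k, ← Real.rpow_add two_pos]
            simp
          calc min ((2:ℝ)^k) ((2:ℝ)^j) * (2:ℝ)^(-(k:ℝ))
              ≤ ((2:ℝ)^k) * (2:ℝ)^(-(k:ℝ)) :=
                mul_le_mul_of_nonneg_right (min_le_left _ _) (Real.rpow_nonneg (by norm_num) _)
            _ = 1 := he
        have hmn : 0 ≤ min ((2:ℝ)^k) ((2:ℝ)^j) := le_min (by positivity) (by positivity)
        calc min ((2:ℝ)^k) ((2:ℝ)^j) * dist ξ.1 η.1
            ≤ min ((2:ℝ)^k) ((2:ℝ)^j) * (c' * ((2:ℝ)^(-(j:ℝ)) + (2:ℝ)^(-(k:ℝ)))) :=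
              mul_le_mul_of_nonneg_left hfar hmn
          _ = c' * (min ((2:ℝ)^k) ((2:ℝ)^j) * (2:ℝ)^(-(j:ℝ))
                + min ((2:ℝ)^k) ((2:ℝ)^j) * (2:ℝ)^(-(k:ℝ))) := by ring
          _ ≤ c' * (1 + 1) := by
              apply mul_le_mul_of_nonneg_left _ hc'.le
              linarith
          _ = 2 * c' := by ring
      unfold adWeight
      set c0 : ℝ := (2:ℝ) ^ ((k:ℝ) * α - (j:ℝ) * α) with hc0
      set A : ℝ := (2:ℝ) ^ (-((j:ℝ) - (k:ℝ)) * ((d:ℝ)/2 + ε)) with hA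
      set Bp : ℝ := (2:ℝ) ^ (((j:ℝ) - (k:ℝ)) * ((d:ℝ)/2 + ε + sigmaP d p)) with hBp
      set X : ℝ := (2:ℝ) ^ (-((j:ℝ) - (k:ℝ)) * ((d:ℝ)/2 + α + ε)) with hX
      set Yτ : ℝ := (2:ℝ) ^ (((j:ℝ) - (k:ℝ)) * ((d:ℝ)/2 - α + ε + sigmaP d τ)) with hYτ
      set Yp : ℝ := (2:ℝ) ^ (((j:ℝ) - (k:ℝ)) * ((d:ℝ)/2 - α + ε + sigmaP d p)) with hYp
      have hc0A : c0 * A = X := by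
        rw [hc0, hA, hX, ← Real.rpow_add two_pos]
        congr 1; ring
      have hc0B : c0 * Bp = Yp := by
        rw [hc0, hBp, hYp, ← Real.rpow_add two_pos]
        congr 1; ring
      set D : ℝ := (1 + min ((2:ℝ)^k) ((2:ℝ)^j) * dist ξ.1 η.1) ^ ((d:ℝ) + ε + sigmaP d p)
        with hD
      have hbase : (0:ℝ) < 1 + min ((2:ℝ)^k) ((2:ℝ)^j) * dist ξ.1 η.1 := by
        have : 0 ≤ min ((2:ℝ)^k) ((2:ℝ)^j) * dist ξ.1 η.1 :=
          mul_nonneg (le_min (by positivity) (by positivity)) dist_nonneg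
        linarith
      have hDpos : 0 < D := Real.rpow_pos_of_pos hbase _
      have hDK : D ≤ K := by
        calc D ≤ (1 + 2 * c') ^ ((d:ℝ) + ε + sigmaP d p) :=
              Real.rpow_le_rpow hbase.le (by linarith) (by positivity)
          _ ≤ K := Real.rpow_le_rpow_of_exponent_le (by linarith) (by linarith)
      have h1 : min X Yτ ≤ c0 * min A Bp := by
        have hc0pos : 0 < c0 := Real.rpow_pos_of_pos two_pos _
        rw [mul_min_of_nonneg _ _ hc0pos.le, hc0A, hc0B]
        refine le_min (min_le_left _ _) ?_
        rcases le_total (j:ℝ) (k:ℝ) with hjk | hjk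
        · refine le_trans (min_le_right _ _) ?_
          rw [hYτ, hYp]
          apply Real.rpow_le_rpow_of_exponent_le (by norm_num)
          nlinarith [hσle]
        · refine le_trans (min_le_left _ _) ?_
          rw [hX, hYp]
          apply Real.rpow_le_rpow_of_exponent_le (by norm_num)
          nlinarith [hσ0, hε.le, hd'.le]
      have hkey2 : min X Yτ ≤ K * (c0 * min A Bp) / D := by
        rw [le_div_iff₀ hDpos]
        calc min X Yτ * D ≤ (c0 * min A Bp) * K := by
              apply mul_le_mul h1 hDK hDpos.le
              have hc0pos : 0 < c0 := Real.rpow_pos_of_pos two_pos _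
              have : 0 ≤ min A Bp := le_min (Real.rpow_nonneg (by norm_num) _)
                (Real.rpow_nonneg (by norm_num) _)
              positivity
          _ = K * (c0 * min A Bp) := by ring
      calc ‖m j ξ k η‖ ≤ C * min X Yτ := hbd j ξ hξ k η hη
        _ ≤ C * (K * (c0 * min A Bp) / D) :=
            mul_le_mul_of_nonneg_left hkey2 hC.le
        _ = C * K * (c0 * min A Bp / D) := by ring
  have hσmono : ∀ p : ℝ, τ ≤ p → sigmaP d p ≤ sigmaP d τ := by
    intro p hp
    unfold sigmaP
    apply mul_le_mul_of_nonneg_left _ (Nat.cast_nonneg d)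
    apply max_le_max _ le_rfl
    have : 1 / p ≤ 1 / τ := one_div_le_one_div_of_le hτpos hp
    linarith
  have hσ0 : ∀ p : ℝ, 0 ≤ sigmaP d p := fun p =>
    mul_nonneg (Nat.cast_nonneg d) (le_max_right _ _)
  constructor
  · exact ⟨ε, hε, C * K, by positivity, key τ (hσ0 τ) le_rfl⟩
  · intro p hp
    exact ⟨ε, hε, C * K, by positivity, key p (hσ0 p) (hσmono p hp)⟩
end
end
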